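/- arXiv:1112.3261 — 2 statements merged into one kernel-verified Lean document; each statement's English description precedes it below -/
import Mathlib

section
/- Let −3 ≤ γ < −2. There exists C > 0 such that for all ξ ∈ ℝ³: ∫_{ℝ³} |ξ − ξ'|^{2(γ+2)} e^{−|ξ'|²/4} dξ' ≤ C (1 + |ξ|²)^{γ+2}. In particular, since |B^{ij}(z)| ≤ |z|^{γ+2}, one gets ( ∫_{ℝ³} |B^{ij}(ξ−ξ')|² M(ξ')^{1/2} dξ' )^{1/2} ≤ C ⟨ξ⟩^{γ+2} for all 1 ≤ i,j ≤ 3 and ξ ∈ ℝ³. -/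
open MeasureTheory Real

noncomputable section VPL

/-- The velocity/space domain `ℝ³`. -/
abbrev E3 : Type := EuclideanSpace ℝ (Fin 3)

/-- Japanese bracket `⟨ξ⟩ = (1+|ξ|²)^{1/2}`. -/
def jap (ξ : E3) : ℝ := Real.sqrt (1 + ‖ξ‖ ^ 2)

/-- Normalized global Maxwellian `M(ξ) = (2π)^{-3/2} e^{-|ξ|²/2}`. -/
def Mx (ξ : E3) : ℝ := (2 * π) ^ (-(3 : ℝ) / 2) * Real.exp (-‖ξ‖ ^ 2 / 2)

/-- `M^{1/2}`. -/
def sqrtM (ξ : E3) : ℝ := Real.sqrt (Mx ξ)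

/-- Partial derivative in the `i`-th coordinate. -/
def pd (i : Fin 3) (f : E3 → ℝ) (ξ : E3) : ℝ :=
  fderiv ℝ f ξ (EuclideanSpace.single i 1)

/-- The Landau collision kernel `B^{ij}(ξ) = (δ_{ij} - ξ_iξ_j/|ξ|²)|ξ|^{γ+2}`. -/
def Bij (γ : ℝ) (i j : Fin 3) (ξ : E3) : ℝ :=
  ((if i = j then (1 : ℝ) else 0) - ξ i * ξ j / ‖ξ‖ ^ 2) * ‖ξ‖ ^ (γ + 2)

/-- The Landau collision operator `Q(f,g)`. -/
def Qop (γ : ℝ) (f g : E3 → ℝ) (ξ : E3) : ℝ :=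
  ∑ i : Fin 3, ∑ j : Fin 3,
    pd i (fun ζ => ∫ ξ', Bij γ i j (ζ - ξ') * (f ξ' * pd j g ζ - pd j f ξ' * g ζ)) ξ

/-- The linearized Landau operator `L`. -/
def Lop (γ : ℝ) (u : E3 → ℝ) (ξ : E3) : ℝ :=
  -((Mx ξ) ^ (-(1 : ℝ) / 2)) *
    (Qop γ Mx (fun ζ => sqrtM ζ * u ζ) ξ + Qop γ (fun ζ => sqrtM ζ * u ζ) Mx ξ)

/-- The nonlinear term `Γ(u₁,u₂)`. -/
def Gam (γ : ℝ) (u₁ u₂ : E3 → ℝ) (ξ : E3) : ℝ :=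
  (Mx ξ) ^ (-(1 : ℝ) / 2) *
    Qop γ (fun ζ => sqrtM ζ * u₁ ζ) (fun ζ => sqrtM ζ * u₂ ζ) ξ

/-- The Landau collision frequency `σ^{ij} = B^{ij} ∗ M`. -/
def sigmaij (γ : ℝ) (i j : Fin 3) (ξ : E3) : ℝ := ∫ ξ', Bij γ i j (ξ - ξ') * Mx ξ'

/-- The time–velocity weight `w_{τ,λ}(t,ξ) = ⟨ξ⟩^{(γ+2)τ} exp(λ⟨ξ⟩²/(1+t)^ϑ)`. -/
def wt (γ τ lam ϑ t : ℝ) (ξ : E3) : ℝ :=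
  jap ξ ^ ((γ + 2) * τ) * Real.exp (lam * jap ξ ^ 2 / (1 + t) ^ ϑ)

/-- Weighted `L²_ξ` norm squared `|u|²_{τ,λ}`. -/
def vnormSq (γ τ lam ϑ t : ℝ) (u : E3 → ℝ) : ℝ :=
  ∫ ξ, (wt γ τ lam ϑ t ξ) ^ 2 * (u ξ) ^ 2

/-- Weighted dissipation norm squared `|u|²_{σ,τ,λ}`. -/
def vsigSq (γ τ lam ϑ t : ℝ) (u : E3 → ℝ) : ℝ :=
  ∑ i : Fin 3, ∑ j : Fin 3, ∫ ξ,
    (wt γ τ lam ϑ t ξ) ^ 2 *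
      (sigmaij γ i j ξ * pd i u ξ * pd j u ξ +
        sigmaij γ i j ξ * (ξ i / 2) * (ξ j / 2) * (u ξ) ^ 2)

/-- `L²_ξ` inner product. -/
def ipv (u v : E3 → ℝ) : ℝ := ∫ ξ, u ξ * v ξ

/-- Macroscopic coefficient `a`. -/
def aC (u : E3 → ℝ) : ℝ := ∫ ξ, sqrtM ξ * u ξ

/-- Macroscopic coefficient `b_i`. -/
def bC (i : Fin 3) (u : E3 → ℝ) : ℝ := ∫ ξ, ξ i * sqrtM ξ * u ξ

/-- Macroscopic coefficient `c`. -/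
def cC (u : E3 → ℝ) : ℝ := (1 / 6) * ∫ ξ, (‖ξ‖ ^ 2 - 3) * sqrtM ξ * u ξ

/-- Macroscopic projection `Pu`. -/
def Pv (u : E3 → ℝ) (ξ : E3) : ℝ :=
  (aC u + (∑ i : Fin 3, bC i u * ξ i) + cC u * (‖ξ‖ ^ 2 - 3)) * sqrtM ξ

/-- Microscopic part `{I - P}u`. -/
def IPv (u : E3 → ℝ) (ξ : E3) : ℝ := u ξ - Pv u ξ

/-- Multi-indices on `ℝ³` as triples of naturals. -/
abbrev MIdx : Type := ℕ × ℕ × ℕ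

/-- Length `|β|` of a multi-index. -/
def deg (β : MIdx) : ℕ := β.1 + β.2.1 + β.2.2

/-- Iterated partial derivative `∂^β`. -/
def pdM (β : MIdx) (f : E3 → ℝ) : E3 → ℝ :=
  (pd 0)^[β.1] ((pd 1)^[β.2.1] ((pd 2)^[β.2.2] f))

/-- The finite set of multi-indices of length at most `N`. -/
def midx (N : ℕ) : Finset MIdx :=
  ((Finset.range (N + 1)) ×ˢ (Finset.range (N + 1)) ×ˢ (Finset.range (N + 1))).filter
    fun β => deg β ≤ N

/-- Pairs `(α,β)` of multi-indices with `|α|+|β| ≤ N`. -/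
def midxP (N : ℕ) : Finset (MIdx × MIdx) :=
  ((midx N) ×ˢ (midx N)).filter fun p => deg p.1 + deg p.2 ≤ N

/-- Partial derivative in the space variable of `u = u(x,ξ)`. -/
def pdx (i : Fin 3) (u : E3 → E3 → ℝ) : E3 → E3 → ℝ :=
  fun x ξ => fderiv ℝ (fun y => u y ξ) x (EuclideanSpace.single i 1)

/-- Iterated space derivative `∂^α_x` of `u = u(x,ξ)`. -/
def pdxM (α : MIdx) (u : E3 → E3 → ℝ) : E3 → E3 → ℝ :=
  (pdx 0)^[α.1] ((pdx 1)^[α.2.1] ((pdx 2)^[α.2.2] u))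

/-- Mixed derivative `∂^α_β = ∂^α_x ∂^β_ξ` of `u = u(x,ξ)`. -/
def pdab (α β : MIdx) (u : E3 → E3 → ℝ) : E3 → E3 → ℝ :=
  fun x => pdM β (pdxM α u x)

/-- Weighted `L²_{x,ξ}` norm squared `‖u‖²_{τ,λ}`. -/
def xnormSq (γ τ lam ϑ t : ℝ) (u : E3 → E3 → ℝ) : ℝ := ∫ x, vnormSq γ τ lam ϑ t (u x)

/-- Weighted dissipation norm squared `‖u‖²_{σ,τ,λ}`. -/
def xsigSq (γ τ lam ϑ t : ℝ) (u : E3 → E3 → ℝ) : ℝ := ∫ x, vsigSq γ τ lam ϑ t (u x)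

/-- `L²_{x,ξ}` inner product. -/
def ipx (u v : E3 → E3 → ℝ) : ℝ := ∫ x, ∫ ξ, u x ξ * v x ξ

/-- `a(x)`. -/
def aF (u : E3 → E3 → ℝ) (x : E3) : ℝ := aC (u x)

/-- `b_i(x)`. -/
def bF (i : Fin 3) (u : E3 → E3 → ℝ) (x : E3) : ℝ := bC i (u x)

/-- `c(x)`. -/
def cF (u : E3 → E3 → ℝ) (x : E3) : ℝ := cC (u x)

/-- `{I-P}u` for `u = u(x,ξ)`. -/
def IPx (u : E3 → E3 → ℝ) : E3 → E3 → ℝ := fun x => IPv (u x)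

/-- The Poisson potential `φ = -(4π|x|)^{-1} ∗ ρ`. -/
def poisson (ρ : E3 → ℝ) (x : E3) : ℝ := -∫ y, ρ y / (4 * π * ‖x - y‖)

/-- The self-consistent potential of `u`. -/
def phiF (u : E3 → E3 → ℝ) : E3 → ℝ := poisson (aF u)

/-- `L²_x` norm squared. -/
def L2Sq (f : E3 → ℝ) : ℝ := ∫ x, (f x) ^ 2

/-- `H^N_x` norm squared. -/
def HsobSq (N : ℕ) (f : E3 → ℝ) : ℝ := ∑ α ∈ midx N, L2Sq (pdM α f)

/-- `‖∇_x f‖²_{H^N}`. -/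
def gradSobSq (N : ℕ) (f : E3 → ℝ) : ℝ := ∑ i : Fin 3, HsobSq N (pd i f)

/-- `‖∇_x (a,b,c)‖²_{H^N}`. -/
def abcGradSobSq (N : ℕ) (u : E3 → E3 → ℝ) : ℝ :=
  gradSobSq N (aF u) + (∑ i : Fin 3, gradSobSq N (bF i u)) + gradSobSq N (cF u)

/-- `‖∇²_x f‖²_{H^N}`. -/
def hessSobSq (N : ℕ) (f : E3 → ℝ) : ℝ :=
  ∑ i : Fin 3, ∑ j : Fin 3, HsobSq N (pd i (pd j f))

/-- Full instant energy norm `|||u(t)|||²_{N,ℓ,λ}`. -/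
def triSq (γ : ℝ) (N : ℕ) (ℓ lam ϑ t : ℝ) (u : E3 → E3 → ℝ) : ℝ :=
  (∑ p ∈ midxP N, xnormSq γ ((deg p.2 : ℝ) - ℓ) lam ϑ t (pdab p.1 p.2 u))
    + gradSobSq N (phiF u)

/-- `Z₁ = L²_ξ(L¹_x)` norm. -/
def Z1 (u : E3 → E3 → ℝ) : ℝ := Real.sqrt (∫ ξ, (∫ x, |u x ξ|) ^ 2)

/-- Un-currying of a Schwartz function on `ℝ³_x × ℝ³_ξ`. -/
def uc (u : SchwartzMap (E3 × E3) ℝ) : E3 → E3 → ℝ := fun x ξ => u (x, ξ)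

end VPL


section AuxKCE

open MeasureTheory Real Metric Set
open scoped ENNReal NNReal

lemma ball_lint {a : ℝ} (ha1 : (-2:ℝ) ≤ a) (ha2 : a < 0) :
    ∃ K : ℝ, 0 ≤ K ∧ ∀ R : ℝ, 0 < R →
      ∫⁻ w : E3 in closedBall 0 R, ENNReal.ofReal (‖w‖ ^ a)
        ≤ ENNReal.ofReal (K * R ^ (a + 3)) := by
  set V : ℝ≥0∞ := volume (ball (0 : E3) 1) with hV
  have hVlt : V < ⊤ := measure_ball_lt_top
  refine ⟨8 * V.toReal, by positivity, fun R hR => ?_⟩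
  set q : ℝ := 1/2 with hq
  have hq0 : (0:ℝ) < q := by norm_num
  have hq1 : q < 1 := by norm_num
  set s : ℝ := q ^ a with hs
  have hs0 : 0 < s := rpow_pos_of_pos hq0 a
  have hs4 : s ≤ 4 := by
    have h1 : q ^ a ≤ q ^ (-2 : ℝ) := rpow_le_rpow_of_exponent_ge hq0 (by norm_num) ha1
    have h2 : q ^ (-2:ℝ) = 4 := by
      rw [hq, show ((-2:ℝ)) = ((-2 : ℤ) : ℝ) by norm_num, Real.rpow_intCast]
      norm_num
    rw [hs]; linarith
  set t : ℝ := q ^ (3:ℕ) with ht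
  have ht0 : 0 < t := by positivity
  have hst : s * t ≤ 1/2 := by
    have h1 : s * t = q ^ (a + 3) := by
      rw [hs, ht, Real.rpow_add hq0, ← Real.rpow_natCast q 3]
      norm_num
    have h2 : q ^ (a + 3) ≤ q ^ (1:ℝ) := rpow_le_rpow_of_exponent_ge hq0 hq1.le (by linarith)
    calc s * t = q ^ (a+3) := h1
      _ ≤ q ^ (1:ℝ) := h2
      _ = 1/2 := by rw [Real.rpow_one]
  have hst0 : (0:ℝ) ≤ s * t := by positivity
  have hqpow : ∀ (n : ℕ), ((q:ℝ) ^ n) ^ a = s ^ n := fun n => by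
    rw [← Real.rpow_natCast q n, ← Real.rpow_mul hq0.le, mul_comm,
      Real.rpow_mul hq0.le, Real.rpow_natCast, hs]
  have hqk3 : ∀ (n : ℕ), ((q:ℝ) ^ n) ^ (3:ℕ) = t ^ n := fun n => by
    rw [ht, ← pow_mul, ← pow_mul, mul_comm]
  clear_value q s t
  set A : ℕ → Set E3 := fun k => closedBall 0 (R * q ^ k) \ closedBall 0 (R * q ^ (k+1)) with hA
  have hcover : closedBall (0:E3) R ⊆ {0} ∪ ⋃ k, A k := by
    intro w hw
    rcases eq_or_ne w 0 with h | h
    · exact Or.inl h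
    · refine Or.inr ?_
      have hw0 : 0 < ‖w‖ := norm_pos_iff.2 h
      have hwR : ‖w‖ ≤ R := mem_closedBall_zero_iff.1 hw
      have hex : ∃ n : ℕ, R * q ^ (n+1) < ‖w‖ := by
        obtain ⟨n, hn⟩ := exists_pow_lt_of_lt_one (x := ‖w‖ / R) (by positivity) hq1
        refine ⟨n, ?_⟩
        have hmono : q ^ (n+1) ≤ q ^ n := pow_le_pow_of_le_one hq0.le hq1.le (Nat.le_succ n)
        rw [lt_div_iff₀ hR] at hn
        nlinarith [mul_le_mul_of_nonneg_left hmono hR.le]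
      set k := Nat.find hex with hk
      have hk1 : R * q ^ (k+1) < ‖w‖ := Nat.find_spec hex
      have hk2 : ‖w‖ ≤ R * q ^ k := by
        rcases Nat.eq_zero_or_pos k with h0 | h0
        · rw [h0]; simpa using hwR
        · have hmin := Nat.find_min hex (m := k - 1) (by omega)
          push_neg at hmin
          have hkk : k - 1 + 1 = k := by omega
          rwa [hkk] at hmin
      refine mem_iUnion.2 ⟨k, mem_closedBall_zero_iff.2 hk2, fun hmem => ?_⟩
      exact absurd (mem_closedBall_zero_iff.1 hmem) (not_le.2 hk1)
  have hAk : ∀ k : ℕ, ∫⁻ w : E3 in A k, ENNReal.ofReal (‖w‖ ^ a)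
      ≤ ENNReal.ofReal ((R ^ (a+3) * s) * (s*t) ^ k) * V := by
    intro k
    have hrad : (0:ℝ) < R * q ^ (k+1) := by positivity
    have hpt : ∀ w ∈ A k, ENNReal.ofReal (‖w‖ ^ a) ≤ ENNReal.ofReal ((R * q ^ (k+1)) ^ a) := by
      intro w hw
      obtain ⟨hw1, hw2⟩ := hw
      have hlow : R * q ^ (k+1) < ‖w‖ := by
        by_contra hcon
        exact hw2 (mem_closedBall_zero_iff.2 (not_lt.1 hcon))
      exact ENNReal.ofReal_le_ofReal (rpow_le_rpow_of_nonpos hrad hlow.le ha2.le)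
    calc ∫⁻ w : E3 in A k, ENNReal.ofReal (‖w‖ ^ a)
        ≤ ∫⁻ _ : E3 in A k, ENNReal.ofReal ((R * q ^ (k+1)) ^ a) :=
          setLIntegral_mono measurable_const hpt
      _ = ENNReal.ofReal ((R * q ^ (k+1)) ^ a) * volume (A k) := setLIntegral_const _ _
      _ ≤ ENNReal.ofReal ((R * q ^ (k+1)) ^ a) * volume (closedBall (0:E3) (R * q ^ k)) := by
          gcongr
          exact fun x hx => hx.1
      _ = ENNReal.ofReal ((R * q ^ (k+1)) ^ a) * (ENNReal.ofReal ((R * q ^ k) ^ (3:ℕ)) * V) := by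
          rw [Measure.addHaar_closedBall _ _ (by positivity)]
          congr 2
          simp [finrank_euclideanSpace]
      _ = ENNReal.ofReal ((R * q ^ (k+1)) ^ a * (R * q ^ k) ^ (3:ℕ)) * V := by
          rw [← mul_assoc, ← ENNReal.ofReal_mul (by positivity)]
      _ = ENNReal.ofReal ((R ^ (a+3) * s) * (s*t) ^ k) * V := by
          congr 1
          have hR3 : R ^ (a+3) = R ^ a * R ^ (3:ℕ) := by
            rw [← Real.rpow_natCast R 3, ← Real.rpow_add hR]
            norm_num
          rw [Real.mul_rpow hR.le (by positivity), hqpow, mul_pow, hR3,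
            mul_pow s t k, ← hqk3]
          ring
  calc ∫⁻ w : E3 in closedBall 0 R, ENNReal.ofReal (‖w‖ ^ a)
      ≤ ∫⁻ w : E3 in ({0} ∪ ⋃ k, A k), ENNReal.ofReal (‖w‖ ^ a) := lintegral_mono_set hcover
    _ ≤ ∫⁻ w : E3, ENNReal.ofReal (‖w‖ ^ a)
          ∂(volume.restrict {0} + volume.restrict (⋃ k, A k)) :=
        lintegral_mono' (Measure.restrict_union_le _ _) le_rfl
    _ = (∫⁻ w : E3 in ({0} : Set E3), ENNReal.ofReal (‖w‖ ^ a))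
          + ∫⁻ w : E3 in ⋃ k, A k, ENNReal.ofReal (‖w‖ ^ a) := lintegral_add_measure _ _ _
    _ = ∫⁻ w : E3 in ⋃ k, A k, ENNReal.ofReal (‖w‖ ^ a) := by
        rw [setLIntegral_measure_zero _ _ (measure_singleton 0), zero_add]
    _ ≤ ∑' k, ∫⁻ w : E3 in A k, ENNReal.ofReal (‖w‖ ^ a) := lintegral_iUnion_le _ _
    _ ≤ ∑' k, ENNReal.ofReal ((R ^ (a+3) * s) * (s*t) ^ k) * V :=
        ENNReal.tsum_le_tsum hAk
    _ = ENNReal.ofReal (R ^ (a+3) * s) * V * ∑' k, (ENNReal.ofReal (s*t)) ^ k := by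
        rw [← ENNReal.tsum_mul_left]
        congr 1 with k
        rw [ENNReal.ofReal_mul (by positivity), ENNReal.ofReal_pow hst0]
        ring
    _ ≤ ENNReal.ofReal (R ^ (a+3) * s) * V * ∑' k, ((2:ℝ≥0∞)⁻¹) ^ k := by
        gcongr with k
        calc ENNReal.ofReal (s*t) ≤ ENNReal.ofReal (1/2) := ENNReal.ofReal_le_ofReal hst
          _ = 2⁻¹ := by
            rw [one_div, ENNReal.ofReal_inv_of_pos two_pos]
            norm_num
    _ = ENNReal.ofReal (R ^ (a+3) * s) * V * 2 := by
        rw [ENNReal.tsum_geometric, ENNReal.one_sub_inv_two, inv_inv]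
    _ = ENNReal.ofReal ((R ^ (a+3) * s) * V.toReal * 2) := by
        rw [ENNReal.ofReal_mul (show (0:ℝ) ≤ R ^ (a+3) * s * V.toReal by positivity),
          ENNReal.ofReal_mul (show (0:ℝ) ≤ R ^ (a+3) * s by positivity),
          ENNReal.ofReal_toReal hVlt.ne, ENNReal.ofReal_ofNat]
    _ ≤ ENNReal.ofReal (8 * V.toReal * R ^ (a + 3)) := by
        apply ENNReal.ofReal_le_ofReal
        have hRpow : (0:ℝ) < R ^ (a+3) := rpow_pos_of_pos hR _
        nlinarith [mul_nonneg (mul_nonneg (sub_nonneg.2 hs4) hRpow.le) (ENNReal.toReal_nonneg (a := V))]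


lemma measurePreserving_sub_left_KCE (ξ : E3) :
    MeasurePreserving (fun x : E3 => ξ - x) volume volume := by
  have h1 : MeasurePreserving (fun x : E3 => -x) volume volume :=
    Measure.measurePreserving_neg volume
  have h2 : MeasurePreserving (fun x : E3 => ξ + x) volume volume :=
    measurePreserving_add_left volume ξ
  simpa [sub_eq_add_neg, Function.comp_def] using h2.comp h1

lemma lint_sub_left_KCE (F : E3 → ℝ≥0∞) (hF : Measurable F) (ξ : E3) :
    ∫⁻ ξ' : E3, F (ξ - ξ') = ∫⁻ w : E3, F w :=
  (measurePreserving_sub_left_KCE ξ).lintegral_comp hF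

set_option maxHeartbeats 1000000 in
lemma measurable_rpow_norm_KCE (a : ℝ) (ξ : E3) :
    Measurable fun ξ' : E3 => ‖ξ - ξ'‖ ^ a := by
  apply measurable_of_continuousOn_compl_singleton ξ
  intro x hx
  have hne : ‖ξ - x‖ ≠ 0 := by
    simp only [ne_eq, norm_eq_zero, sub_eq_zero]
    intro h
    exact hx (by simp [Set.mem_singleton_iff, h.symm])
  have hcont : Continuous fun ξ' : E3 => ‖ξ - ξ'‖ :=
    (continuous_const.sub continuous_id).norm
  exact (hcont.continuousAt.rpow_const (Or.inl hne)).continuousWithinAt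

set_option maxHeartbeats 1000000 in
lemma measurable_rpow_norm0_KCE (a : ℝ) :
    Measurable fun w : E3 => ‖w‖ ^ a := by
  apply measurable_of_continuousOn_compl_singleton (0 : E3)
  intro x hx
  have hne : ‖x‖ ≠ 0 := by
    simp only [ne_eq, norm_eq_zero]
    intro h
    exact hx (by simp [Set.mem_singleton_iff, h])
  exact (continuous_norm.continuousAt.rpow_const (Or.inl hne)).continuousWithinAt

lemma measurable_gauss_KCE : Measurable fun ξ' : E3 => Real.exp (-‖ξ'‖^2/4) :=
  Real.measurable_exp.comp (((measurable_norm.pow_const 2).neg).div_const 4)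

lemma lint_sub_left_set_KCE (a : ℝ) (ξ : E3) (R : ℝ) :
    ∫⁻ ξ' : E3 in {ξ' | ‖ξ - ξ'‖ ≤ R}, ENNReal.ofReal (‖ξ - ξ'‖ ^ a)
      = ∫⁻ w : E3 in closedBall 0 R, ENNReal.ofReal (‖w‖ ^ a) := by
  have hpre : {ξ' : E3 | ‖ξ - ξ'‖ ≤ R} = (fun ξ' : E3 => ξ - ξ') ⁻¹' closedBall 0 R := by
    ext ξ'
    simp [mem_closedBall_zero_iff]
  have hSm : MeasurableSet {ξ' : E3 | ‖ξ - ξ'‖ ≤ R} := by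
    rw [hpre]
    exact (measurable_const.sub measurable_id) measurableSet_closedBall
  have hmeas : Measurable fun w : E3 =>
      (closedBall (0:E3) R).indicator (fun w => ENNReal.ofReal (‖w‖ ^ a)) w :=
    ((measurable_rpow_norm0_KCE a).ennreal_ofReal).indicator measurableSet_closedBall
  have h1 : ∀ ξ' : E3,
      ({ξ' : E3 | ‖ξ - ξ'‖ ≤ R}.indicator (fun ξ' => ENNReal.ofReal (‖ξ - ξ'‖ ^ a)) ξ')
        = (closedBall (0:E3) R).indicator (fun w => ENNReal.ofReal (‖w‖ ^ a)) (ξ - ξ') := by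
    intro ξ'
    by_cases h : ‖ξ - ξ'‖ ≤ R <;>
      simp [Set.indicator_apply, Set.mem_setOf_eq, mem_closedBall_zero_iff, h]
  rw [← lintegral_indicator hSm _]
  simp_rw [h1]
  rw [lint_sub_left_KCE _ hmeas ξ, lintegral_indicator measurableSet_closedBall _]

lemma sqrt_exp_KCE (x : ℝ) : Real.sqrt (Real.exp x) = Real.exp (x/2) := by
  have h : Real.exp (x/2) ^ 2 = Real.exp x := by
    rw [sq, ← Real.exp_add]
    ring_nf
  rw [← h, Real.sqrt_sq (Real.exp_nonneg _)]

lemma gauss_integrable_KCE : Integrable (fun v : E3 => Real.exp (-‖v‖^2/4)) := by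
  have h := GaussianFourier.integrable_cexp_neg_mul_sq_norm_add (V := E3)
    (b := (4⁻¹ : ℂ)) (by norm_num) 0 (0 : E3)
  have h2 := h.norm
  refine (integrable_congr ?_).1 h2
  filter_upwards with v
  rw [Complex.norm_exp]
  congr 1
  simp [← Complex.ofReal_pow]
  ring

lemma coord_sq_le_KCE (z : E3) (m : Fin 3) : (z m)^2 ≤ ‖z‖^2 := by
  have hsum : ‖z‖^2 = ∑ k : Fin 3, (z k)^2 := by
    rw [EuclideanSpace.norm_eq, Real.sq_sqrt (Finset.sum_nonneg fun k _ => by positivity)]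
    simp [Real.norm_eq_abs, sq_abs]
  rw [hsum]
  exact Finset.single_le_sum (f := fun k => (z k)^2) (fun k _ => sq_nonneg _) (Finset.mem_univ m)

lemma Bij_sq_le_KCE (γ : ℝ) (hγ : γ + 2 ≠ 0) (i j : Fin 3) (z : E3) :
    (Bij γ i j z)^2 ≤ ‖z‖ ^ (2*(γ+2)) := by
  have h2γ : 2*(γ+2) ≠ 0 := by
    intro h
    apply hγ
    linarith
  rcases eq_or_ne z 0 with rfl | hz
  · simp [Bij, Real.zero_rpow hγ, Real.zero_rpow h2γ]
  · have hz0 : 0 < ‖z‖ := norm_pos_iff.2 hz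
    have hn : (0:ℝ) < ‖z‖^2 := by positivity
    have hq : ((if i = j then (1:ℝ) else 0) - z i * z j / ‖z‖^2)^2 ≤ 1 := by
      by_cases hij : i = j
      · subst hij
        rw [if_pos rfl]
        have h1 : (0:ℝ) ≤ z i * z i / ‖z‖^2 := by
          have : (0:ℝ) ≤ z i * z i := mul_self_nonneg _
          positivity
        have h2 : z i * z i / ‖z‖^2 ≤ 1 := by
          rw [div_le_one hn]
          have := coord_sq_le_KCE z i
          nlinarith
        nlinarith
      · rw [if_neg hij]
        have h1 : (z i * z j / ‖z‖^2)^2 ≤ 1 := by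
          rw [div_pow, div_le_one (by positivity)]
          have hi := coord_sq_le_KCE z i
          have hj := coord_sq_le_KCE z j
          nlinarith [sq_nonneg (z i), sq_nonneg (z j)]
        nlinarith
    have hrw : (‖z‖ ^ (γ+2))^2 = ‖z‖ ^ (2*(γ+2)) := by
      rw [← Real.rpow_natCast (‖z‖ ^ (γ+2)) 2, ← Real.rpow_mul (norm_nonneg z)]
      norm_num
      rw [mul_comm]
    calc (Bij γ i j z)^2
        = ((if i = j then (1:ℝ) else 0) - z i * z j / ‖z‖^2)^2 * (‖z‖ ^ (γ+2))^2 := by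
          rw [Bij]; ring
      _ ≤ 1 * (‖z‖ ^ (γ+2))^2 := mul_le_mul_of_nonneg_right hq (sq_nonneg _)
      _ = ‖z‖ ^ (2*(γ+2)) := by rw [one_mul, hrw]

lemma sqrtMx_KCE (ξ : E3) :
    Real.sqrt (Mx ξ) = Real.sqrt ((2*π) ^ (-(3:ℝ)/2)) * Real.exp (-‖ξ‖^2/4) := by
  rw [Mx, Real.sqrt_mul (by positivity), sqrt_exp_KCE,
    show -‖ξ‖^2/2/2 = -‖ξ‖^2/4 from by ring]

set_option maxHeartbeats 2000000 in
lemma main_lint_KCE (γ : ℝ) (hγ1 : -3 ≤ γ) (hγ2 : γ < -2) :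
    ∃ C : ℝ, 0 < C ∧ ∀ ξ : E3,
      ∫⁻ ξ' : E3, ENNReal.ofReal (‖ξ - ξ'‖ ^ (2*(γ+2)) * Real.exp (-‖ξ'‖^2/4))
        ≤ ENNReal.ofReal (C * (1 + ‖ξ‖^2) ^ (γ+2)) := by
  have hb0 : γ + 2 < 0 := by linarith
  have ha1 : (-2:ℝ) ≤ 2*(γ+2) := by linarith
  have ha2 : 2*(γ+2) < 0 := by linarith
  obtain ⟨K, hK0, hKb⟩ := ball_lint ha1 ha2
  set a : ℝ := 2*(γ+2) with hadef
  set b : ℝ := γ + 2 with hbdef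
  have hab : a = 2*b := by rw [hadef, hbdef]
  have hG0 : (0:ℝ) ≤ ∫ v : E3, Real.exp (-‖v‖^2/4) :=
    integral_nonneg fun v => Real.exp_nonneg _
  set G : ℝ := ∫ v : E3, Real.exp (-‖v‖^2/4) with hGdef
  have hGl : ∫⁻ v : E3, ENNReal.ofReal (Real.exp (-‖v‖^2/4)) = ENNReal.ofReal G :=
    (ofReal_integral_eq_lintegral_ofReal gauss_integrable_KCE
      (Filter.Eventually.of_forall fun v => Real.exp_nonneg _)).symm
  set C1 : ℝ := (K + G) * 2^(-b) with hC1
  set C2 : ℝ := 2^(-b) * (1024 * 2^(-(a+3)) * K + 2^(-a) * G) with hC2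
  have h2bpos : (0:ℝ) < 2^(-b) := rpow_pos_of_pos two_pos _
  have h2a3pos : (0:ℝ) < 2^(-(a+3)) := rpow_pos_of_pos two_pos _
  have h2apos : (0:ℝ) < 2^(-a) := rpow_pos_of_pos two_pos _
  have hC1' : 0 ≤ C1 := mul_nonneg (by linarith) h2bpos.le
  have hC2' : 0 ≤ C2 := by
    apply mul_nonneg h2bpos.le
    have := mul_nonneg (mul_nonneg (by norm_num : (0:ℝ) ≤ 1024) h2a3pos.le) hK0
    have := mul_nonneg h2apos.le hG0
    linarith
  refine ⟨C1 + C2 + 1, by linarith, fun ξ => ?_⟩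
  set u : ℝ := ‖ξ‖ with hudef
  have hu0' : (0:ℝ) ≤ u := norm_nonneg ξ
  have hT0 : (0:ℝ) < 1 + u^2 := by positivity
  have hTb0 : (0:ℝ) < (1 + u^2) ^ b := rpow_pos_of_pos hT0 b
  have hm1 : Measurable fun ξ' : E3 => ENNReal.ofReal (‖ξ - ξ'‖ ^ a) :=
    (measurable_rpow_norm_KCE a ξ).ennreal_ofReal
  have hm2 : Measurable fun ξ' : E3 => ENNReal.ofReal (Real.exp (-‖ξ'‖^2/4)) :=
    measurable_gauss_KCE.ennreal_ofReal
  rcases le_or_gt u 1 with hu | hu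
  · -- small case
    set S : Set E3 := {ξ' | ‖ξ - ξ'‖ ≤ 1} with hSdef
    have hSm : MeasurableSet S := by
      have hpre : S = (fun ξ' : E3 => ξ - ξ') ⁻¹' closedBall 0 1 := by
        ext ξ'
        simp [hSdef, mem_closedBall_zero_iff]
      rw [hpre]
      exact (measurable_const.sub measurable_id) measurableSet_closedBall
    have hnear : ∫⁻ ξ' : E3 in S, ENNReal.ofReal (‖ξ - ξ'‖ ^ a * Real.exp (-‖ξ'‖^2/4))
        ≤ ENNReal.ofReal K := by
      calc ∫⁻ ξ' : E3 in S, ENNReal.ofReal (‖ξ - ξ'‖ ^ a * Real.exp (-‖ξ'‖^2/4))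
          ≤ ∫⁻ ξ' : E3 in S, ENNReal.ofReal (‖ξ - ξ'‖ ^ a) := by
            apply setLIntegral_mono hm1
            intro ξ' _
            apply ENNReal.ofReal_le_ofReal
            have h1 : Real.exp (-‖ξ'‖^2/4) ≤ 1 := by
              apply Real.exp_le_one_iff.2
              have : (0:ℝ) ≤ ‖ξ'‖^2 := sq_nonneg _
              linarith
            have h2 : (0:ℝ) ≤ ‖ξ - ξ'‖ ^ a := Real.rpow_nonneg (norm_nonneg _) a
            nlinarith
        _ = ∫⁻ w : E3 in closedBall 0 1, ENNReal.ofReal (‖w‖ ^ a) :=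
            lint_sub_left_set_KCE a ξ 1
        _ ≤ ENNReal.ofReal (K * 1 ^ (a+3)) := hKb 1 one_pos
        _ = ENNReal.ofReal K := by rw [Real.one_rpow, mul_one]
    have hfar : ∫⁻ ξ' : E3 in Sᶜ, ENNReal.ofReal (‖ξ - ξ'‖ ^ a * Real.exp (-‖ξ'‖^2/4))
        ≤ ENNReal.ofReal G := by
      calc ∫⁻ ξ' : E3 in Sᶜ, ENNReal.ofReal (‖ξ - ξ'‖ ^ a * Real.exp (-‖ξ'‖^2/4))
          ≤ ∫⁻ ξ' : E3 in Sᶜ, ENNReal.ofReal (Real.exp (-‖ξ'‖^2/4)) := by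
            apply setLIntegral_mono hm2
            intro ξ' hξ'
            apply ENNReal.ofReal_le_ofReal
            have hgt : (1:ℝ) < ‖ξ - ξ'‖ := by
              simp only [hSdef, Set.mem_compl_iff, Set.mem_setOf_eq, not_le] at hξ'
              exact hξ'
            have h1 : ‖ξ - ξ'‖ ^ a ≤ 1 := by
              have := Real.rpow_le_rpow_of_nonpos one_pos hgt.le ha2.le
              rwa [Real.one_rpow] at this
            have h2 : (0:ℝ) ≤ Real.exp (-‖ξ'‖^2/4) := Real.exp_nonneg _
            nlinarith [Real.rpow_nonneg (norm_nonneg (ξ - ξ')) a]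
        _ ≤ ∫⁻ ξ' : E3, ENNReal.ofReal (Real.exp (-‖ξ'‖^2/4)) :=
            setLIntegral_le_lintegral _ _
        _ = ENNReal.ofReal G := hGl
    calc ∫⁻ ξ' : E3, ENNReal.ofReal (‖ξ - ξ'‖ ^ a * Real.exp (-‖ξ'‖^2/4))
        = (∫⁻ ξ' : E3 in S, ENNReal.ofReal (‖ξ - ξ'‖ ^ a * Real.exp (-‖ξ'‖^2/4)))
            + ∫⁻ ξ' : E3 in Sᶜ, ENNReal.ofReal (‖ξ - ξ'‖ ^ a * Real.exp (-‖ξ'‖^2/4)) :=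
          (lintegral_add_compl _ hSm).symm
      _ ≤ ENNReal.ofReal K + ENNReal.ofReal G := add_le_add hnear hfar
      _ = ENNReal.ofReal (K + G) := (ENNReal.ofReal_add hK0 hG0).symm
      _ ≤ ENNReal.ofReal ((C1 + C2 + 1) * (1 + u^2) ^ b) := by
          apply ENNReal.ofReal_le_ofReal
          have h2b : (2:ℝ)^b ≤ (1 + u^2) ^ b :=
            Real.rpow_le_rpow_of_nonpos hT0 (by nlinarith) hb0.le
          have hsq : (2:ℝ)^(-b) * 2^b = 1 := by
            rw [← Real.rpow_add two_pos]
            simp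
          have h1 : (1:ℝ) ≤ 2^(-b) * (1 + u^2) ^ b := by
            calc (1:ℝ) = 2^(-b) * 2^b := hsq.symm
              _ ≤ 2^(-b) * (1 + u^2)^b :=
                mul_le_mul_of_nonneg_left h2b h2bpos.le
          calc K + G ≤ (K + G) * (2^(-b) * (1 + u^2)^b) :=
                le_mul_of_one_le_right (by linarith) h1
            _ = C1 * (1 + u^2)^b := by rw [hC1]; ring
            _ ≤ (C1 + C2 + 1) * (1 + u^2)^b := by nlinarith
  · -- large case
    have hu0 : (0:ℝ) < u := by linarith
    have hR : (0:ℝ) < u/2 := by linarith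
    set S : Set E3 := {ξ' | ‖ξ - ξ'‖ ≤ u/2} with hSdef
    have hSm : MeasurableSet S := by
      have hpre : S = (fun ξ' : E3 => ξ - ξ') ⁻¹' closedBall 0 (u/2) := by
        ext ξ'
        simp [hSdef, mem_closedBall_zero_iff]
      rw [hpre]
      exact (measurable_const.sub measurable_id) measurableSet_closedBall
    have hdivpow : ∀ c : ℝ, (u/2) ^ c = u ^ c * 2 ^ (-c) := fun c => by
      rw [div_eq_mul_inv, Real.mul_rpow hu0.le (by norm_num),
        Real.inv_rpow (by norm_num), ← Real.rpow_neg (by norm_num)]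
    have hKR : (0:ℝ) ≤ K * (u/2)^(a+3) := mul_nonneg hK0 (Real.rpow_nonneg hR.le _)
    have hnear : ∫⁻ ξ' : E3 in S, ENNReal.ofReal (‖ξ - ξ'‖ ^ a * Real.exp (-‖ξ'‖^2/4))
        ≤ ENNReal.ofReal (K * (u/2)^(a+3) * Real.exp (-u^2/16)) := by
      have hS2 : ∫⁻ ξ' : E3 in S, ENNReal.ofReal (‖ξ - ξ'‖ ^ a)
          ≤ ENNReal.ofReal (K * (u/2)^(a+3)) := by
        rw [hSdef, lint_sub_left_set_KCE a ξ (u/2)]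
        exact hKb (u/2) hR
      calc ∫⁻ ξ' : E3 in S, ENNReal.ofReal (‖ξ - ξ'‖ ^ a * Real.exp (-‖ξ'‖^2/4))
          ≤ ∫⁻ ξ' : E3 in S, ENNReal.ofReal (‖ξ - ξ'‖ ^ a) * ENNReal.ofReal (Real.exp (-u^2/16)) := by
            apply setLIntegral_mono (hm1.mul_const _)
            intro ξ' hξ'
            rw [← ENNReal.ofReal_mul (Real.rpow_nonneg (norm_nonneg _) a)]
            apply ENNReal.ofReal_le_ofReal
            have hmem : ‖ξ - ξ'‖ ≤ u/2 := hξ'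
            have hnorm : u/2 ≤ ‖ξ'‖ := by
              have := norm_sub_norm_le ξ ξ'
              have huu : ‖ξ‖ = u := rfl
              linarith
            have hexp : Real.exp (-‖ξ'‖^2/4) ≤ Real.exp (-u^2/16) := by
              apply Real.exp_le_exp.2
              nlinarith
            exact mul_le_mul_of_nonneg_left hexp (Real.rpow_nonneg (norm_nonneg _) a)
        _ = (∫⁻ ξ' : E3 in S, ENNReal.ofReal (‖ξ - ξ'‖ ^ a)) * ENNReal.ofReal (Real.exp (-u^2/16)) :=
            lintegral_mul_const _ hm1
        _ ≤ ENNReal.ofReal (K * (u/2)^(a+3)) * ENNReal.ofReal (Real.exp (-u^2/16)) :=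
            mul_le_mul_left hS2 _
        _ = ENNReal.ofReal (K * (u/2)^(a+3) * Real.exp (-u^2/16)) :=
            (ENNReal.ofReal_mul hKR).symm
    have hfar : ∫⁻ ξ' : E3 in Sᶜ, ENNReal.ofReal (‖ξ - ξ'‖ ^ a * Real.exp (-‖ξ'‖^2/4))
        ≤ ENNReal.ofReal ((u/2)^a * G) := by
      calc ∫⁻ ξ' : E3 in Sᶜ, ENNReal.ofReal (‖ξ - ξ'‖ ^ a * Real.exp (-‖ξ'‖^2/4))
          ≤ ∫⁻ ξ' : E3 in Sᶜ, ENNReal.ofReal ((u/2)^a) * ENNReal.ofReal (Real.exp (-‖ξ'‖^2/4)) := by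
            apply setLIntegral_mono (measurable_const.mul hm2)
            intro ξ' hξ'
            simp only [Pi.mul_apply]
            rw [← ENNReal.ofReal_mul (Real.rpow_nonneg hR.le a)]
            apply ENNReal.ofReal_le_ofReal
            have hgt : u/2 < ‖ξ - ξ'‖ := by
              simp only [hSdef, Set.mem_compl_iff, Set.mem_setOf_eq, not_le] at hξ'
              exact hξ'
            have h1 : ‖ξ - ξ'‖ ^ a ≤ (u/2) ^ a :=
              Real.rpow_le_rpow_of_nonpos hR hgt.le ha2.le
            exact mul_le_mul_of_nonneg_right h1 (Real.exp_nonneg _)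
        _ ≤ ∫⁻ ξ' : E3, ENNReal.ofReal ((u/2)^a) * ENNReal.ofReal (Real.exp (-‖ξ'‖^2/4)) :=
            setLIntegral_le_lintegral _ _
        _ = ENNReal.ofReal ((u/2)^a) * ENNReal.ofReal G := by
            rw [lintegral_const_mul _ hm2, hGl]
        _ = ENNReal.ofReal ((u/2)^a * G) :=
            (ENNReal.ofReal_mul (Real.rpow_nonneg hR.le a)).symm
    have hreal : K * (u/2)^(a+3) * Real.exp (-u^2/16) + (u/2)^a * G
        ≤ (C1 + C2 + 1) * (1 + u^2)^b := by
      have hub : u ^ a ≤ 2^(-b) * (1 + u^2)^b := by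
        have h1 : ((2:ℝ)*u^2)^b ≤ (1+u^2)^b :=
          Real.rpow_le_rpow_of_nonpos hT0 (by nlinarith) hb0.le
        have h2 : ((2:ℝ)*u^2)^b = 2^b * u^a := by
          rw [Real.mul_rpow (by norm_num) (sq_nonneg u), ← Real.rpow_natCast u 2,
            ← Real.rpow_mul hu0.le, hab]
          norm_num
        have h3 : (2:ℝ)^b * u^a ≤ (1+u^2)^b := by rw [← h2]; exact h1
        calc u^a = 2^(-b) * (2^b * u^a) := by
              rw [← mul_assoc, ← Real.rpow_add two_pos]
              simp
          _ ≤ 2^(-b) * (1+u^2)^b := mul_le_mul_of_nonneg_left h3 h2bpos.le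
      have hexp3 : u^(3:ℕ) * Real.exp (-u^2/16) ≤ 1024 := by
        have h1 : u^2/32 + 1 ≤ Real.exp (u^2/32) := by
          have := Real.add_one_le_exp (u^2/32)
          linarith
        have h3 : Real.exp (u^2/32) * Real.exp (u^2/32) = Real.exp (u^2/16) := by
          rw [← Real.exp_add]
          ring_nf
        have h4 : u^4 ≤ 1024 * Real.exp (u^2/16) := by
          nlinarith [Real.exp_nonneg (u^2/32), sq_nonneg u]
        have h5 : (u:ℝ)^(3:ℕ) ≤ u^4 := by nlinarith [mul_nonneg (pow_nonneg hu0.le 3) (show (0:ℝ) ≤ u - 1 by linarith)]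
        calc u^(3:ℕ) * Real.exp (-u^2/16)
            ≤ (1024 * Real.exp (u^2/16)) * Real.exp (-u^2/16) :=
              mul_le_mul_of_nonneg_right (h5.trans h4) (Real.exp_nonneg _)
          _ = 1024 := by
              rw [mul_assoc, ← Real.exp_add,
                show u^2/16 + -u^2/16 = 0 from by ring, Real.exp_zero, mul_one]
      have hnearR : (u/2)^(a+3) * Real.exp (-u^2/16) ≤ 1024 * 2^(-(a+3)) * u^a := by
        have hsplit : (u/2)^(a+3) = u^a * u^(3:ℕ) * 2^(-(a+3)) := by
          rw [hdivpow (a+3)]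
          congr 1
          rw [← Real.rpow_natCast u 3, ← Real.rpow_add hu0]
          norm_num
        rw [hsplit]
        calc u^a * u^(3:ℕ) * 2^(-(a+3)) * Real.exp (-u^2/16)
            = (u^(3:ℕ) * Real.exp (-u^2/16)) * (u^a * 2^(-(a+3))) := by ring
          _ ≤ 1024 * (u^a * 2^(-(a+3))) := by
              apply mul_le_mul_of_nonneg_right hexp3
              have := Real.rpow_nonneg hu0.le a
              nlinarith
          _ = 1024 * 2^(-(a+3)) * u^a := by ring
      have hcomb : K * (u/2)^(a+3) * Real.exp (-u^2/16) + (u/2)^a * G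
          ≤ (1024 * 2^(-(a+3)) * K + 2^(-a) * G) * u^a := by
        have e1 : K * ((u/2)^(a+3) * Real.exp (-u^2/16)) ≤ K * (1024 * 2^(-(a+3)) * u^a) :=
          mul_le_mul_of_nonneg_left hnearR hK0
        have e2 : (u/2)^a = u^a * 2^(-a) := hdivpow a
        calc K * (u/2)^(a+3) * Real.exp (-u^2/16) + (u/2)^a * G
            = K * ((u/2)^(a+3) * Real.exp (-u^2/16)) + (u^a * 2^(-a)) * G := by
              rw [e2]; ring
          _ ≤ K * (1024 * 2^(-(a+3)) * u^a) + (u^a * 2^(-a)) * G := by linarith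
          _ = (1024 * 2^(-(a+3)) * K + 2^(-a) * G) * u^a := by ring
      have hnn : (0:ℝ) ≤ 1024 * 2^(-(a+3)) * K + 2^(-a) * G := by
        have := mul_nonneg (mul_nonneg (by norm_num : (0:ℝ) ≤ 1024) h2a3pos.le) hK0
        have := mul_nonneg h2apos.le hG0
        linarith
      have hfinal : (1024 * 2^(-(a+3)) * K + 2^(-a) * G) * u^a ≤ C2 * (1+u^2)^b := by
        calc (1024 * 2^(-(a+3)) * K + 2^(-a) * G) * u^a
            ≤ (1024 * 2^(-(a+3)) * K + 2^(-a) * G) * (2^(-b) * (1+u^2)^b) :=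
              mul_le_mul_of_nonneg_left hub hnn
          _ = C2 * (1+u^2)^b := by rw [hC2]; ring
      have hlast : C2 * (1+u^2)^b ≤ (C1+C2+1) * (1+u^2)^b := by nlinarith
      linarith
    calc ∫⁻ ξ' : E3, ENNReal.ofReal (‖ξ - ξ'‖ ^ a * Real.exp (-‖ξ'‖^2/4))
        = (∫⁻ ξ' : E3 in S, ENNReal.ofReal (‖ξ - ξ'‖ ^ a * Real.exp (-‖ξ'‖^2/4)))
            + ∫⁻ ξ' : E3 in Sᶜ, ENNReal.ofReal (‖ξ - ξ'‖ ^ a * Real.exp (-‖ξ'‖^2/4)) :=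
          (lintegral_add_compl _ hSm).symm
      _ ≤ ENNReal.ofReal (K * (u/2)^(a+3) * Real.exp (-u^2/16))
            + ENNReal.ofReal ((u/2)^a * G) := add_le_add hnear hfar
      _ = ENNReal.ofReal (K * (u/2)^(a+3) * Real.exp (-u^2/16) + (u/2)^a * G) :=
          (ENNReal.ofReal_add (mul_nonneg hKR (Real.exp_nonneg _))
            (mul_nonneg (Real.rpow_nonneg hR.le _) hG0)).symm
      _ ≤ ENNReal.ofReal ((C1 + C2 + 1) * (1 + u^2) ^ b) :=
          ENNReal.ofReal_le_ofReal hreal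

end AuxKCE

set_option maxHeartbeats 2000000 in
theorem kernel_convolution_estimate (γ : ℝ) (hγ1 : -3 ≤ γ) (hγ2 : γ < -2) :
    ∃ C > (0 : ℝ),
      (∀ ξ : E3,
        (∫ ξ' : E3, ‖ξ - ξ'‖ ^ (2 * (γ + 2)) * Real.exp (-‖ξ'‖ ^ 2 / 4))
          ≤ C * (1 + ‖ξ‖ ^ 2) ^ (γ + 2)) ∧
      (∀ i j : Fin 3, ∀ ξ : E3,
        Real.sqrt (∫ ξ' : E3, (Bij γ i j (ξ - ξ')) ^ 2 * Real.sqrt (Mx ξ'))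
          ≤ C * jap ξ ^ (γ + 2)) := by
  obtain ⟨C0, hC0, hmain⟩ := main_lint_KCE γ hγ1 hγ2
  have hγne : γ + 2 ≠ 0 := by linarith
  set c0 : ℝ := Real.sqrt ((2*π) ^ (-(3:ℝ)/2)) with hc0
  have hc00 : 0 ≤ c0 := Real.sqrt_nonneg _
  set Cf : ℝ := max C0 (Real.sqrt (c0 * C0)) + 1 with hCf
  have hCfpos : 0 < Cf := by
    have h := le_max_left C0 (Real.sqrt (c0 * C0))
    rw [hCf]
    linarith
  have hmeasf : ∀ ξ : E3, Measurable
      (fun ξ' : E3 => ‖ξ - ξ'‖ ^ (2*(γ+2)) * Real.exp (-‖ξ'‖^2/4)) :=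
    fun ξ => (measurable_rpow_norm_KCE _ ξ).mul measurable_gauss_KCE
  refine ⟨Cf, hCfpos, fun ξ => ?_, fun i j ξ => ?_⟩
  · have hXpos : (0:ℝ) < (1 + ‖ξ‖^2) ^ (γ+2) := Real.rpow_pos_of_pos (by positivity) _
    rw [integral_eq_lintegral_of_nonneg_ae
      (Filter.Eventually.of_forall fun ξ' => by positivity)
      (hmeasf ξ).aestronglyMeasurable]
    apply ENNReal.toReal_le_of_le_ofReal (mul_nonneg hCfpos.le hXpos.le)
    refine le_trans (hmain ξ) (ENNReal.ofReal_le_ofReal ?_)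
    have h := le_max_left C0 (Real.sqrt (c0 * C0))
    nlinarith
  · have hjpos : (0:ℝ) < jap ξ ^ (γ+2) :=
      Real.rpow_pos_of_pos (Real.sqrt_pos.2 (by positivity)) _
    have hg : ∀ ξ' : E3, (Bij γ i j (ξ - ξ'))^2 * Real.sqrt (Mx ξ')
        ≤ c0 * (‖ξ - ξ'‖ ^ (2*(γ+2)) * Real.exp (-‖ξ'‖^2/4)) := by
      intro ξ'
      rw [sqrtMx_KCE]
      have h1 := Bij_sq_le_KCE γ hγne i j (ξ - ξ')
      calc (Bij γ i j (ξ - ξ'))^2 * (c0 * Real.exp (-‖ξ'‖^2/4))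
          ≤ ‖ξ - ξ'‖^(2*(γ+2)) * (c0 * Real.exp (-‖ξ'‖^2/4)) :=
            mul_le_mul_of_nonneg_right h1 (by positivity)
        _ = c0 * (‖ξ - ξ'‖ ^ (2*(γ+2)) * Real.exp (-‖ξ'‖^2/4)) := by ring
    have hmeasg : Measurable (fun ξ' : E3 => (Bij γ i j (ξ - ξ'))^2 * Real.sqrt (Mx ξ')) := by
      have hsub : Measurable fun ξ' : E3 => ξ - ξ' :=
        measurable_const.sub measurable_id
      have hci : Measurable fun ξ' : E3 => (ξ - ξ') i :=
        ((EuclideanSpace.proj (𝕜 := ℝ) i).continuous.measurable).comp hsub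
      have hcj : Measurable fun ξ' : E3 => (ξ - ξ') j :=
        ((EuclideanSpace.proj (𝕜 := ℝ) j).continuous.measurable).comp hsub
      have hB : Measurable fun ξ' : E3 => Bij γ i j (ξ - ξ') := by
        have : (fun ξ' : E3 => Bij γ i j (ξ - ξ')) = fun ξ' : E3 =>
            ((if i = j then (1:ℝ) else 0) - (ξ-ξ') i * (ξ-ξ') j / ‖ξ-ξ'‖^2)
              * ‖ξ-ξ'‖^(γ+2) := rfl
        rw [this]
        exact (measurable_const.sub ((hci.mul hcj).div
          ((hsub.norm).pow_const 2))).mul (measurable_rpow_norm_KCE (γ+2) ξ)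
      have hMx : Measurable fun ξ' : E3 => Real.sqrt (Mx ξ') := by
        apply (Real.continuous_sqrt.comp ?_).measurable
        exact continuous_const.mul
          (Real.continuous_exp.comp ((continuous_norm.pow 2).neg.div_const 2))
      exact (hB.pow_const 2).mul hMx
    rw [integral_eq_lintegral_of_nonneg_ae
      (Filter.Eventually.of_forall fun ξ' =>
        mul_nonneg (sq_nonneg _) (Real.sqrt_nonneg _))
      hmeasg.aestronglyMeasurable]
    have hle : ∫⁻ ξ' : E3, ENNReal.ofReal ((Bij γ i j (ξ - ξ'))^2 * Real.sqrt (Mx ξ'))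
        ≤ ENNReal.ofReal ((c0 * C0) * (1 + ‖ξ‖^2)^(γ+2)) := by
      calc ∫⁻ ξ' : E3, ENNReal.ofReal ((Bij γ i j (ξ - ξ'))^2 * Real.sqrt (Mx ξ'))
          ≤ ∫⁻ ξ' : E3, ENNReal.ofReal (c0 * (‖ξ - ξ'‖ ^ (2*(γ+2)) * Real.exp (-‖ξ'‖^2/4))) :=
            lintegral_mono fun ξ' => ENNReal.ofReal_le_ofReal (hg ξ')
        _ = ENNReal.ofReal c0
              * ∫⁻ ξ' : E3, ENNReal.ofReal (‖ξ - ξ'‖ ^ (2*(γ+2)) * Real.exp (-‖ξ'‖^2/4)) := by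
            simp_rw [ENNReal.ofReal_mul hc00]
            exact lintegral_const_mul _ (hmeasf ξ).ennreal_ofReal
        _ ≤ ENNReal.ofReal c0 * ENNReal.ofReal (C0 * (1 + ‖ξ‖^2)^(γ+2)) :=
            mul_le_mul_right (hmain ξ) _
        _ = ENNReal.ofReal ((c0 * C0) * (1 + ‖ξ‖^2)^(γ+2)) := by
            rw [← ENNReal.ofReal_mul hc00]
            ring_nf
    have h2 : (∫⁻ ξ' : E3, ENNReal.ofReal ((Bij γ i j (ξ - ξ'))^2 * Real.sqrt (Mx ξ'))).toReal
        ≤ (c0 * C0) * (1 + ‖ξ‖^2)^(γ+2) :=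
      ENNReal.toReal_le_of_le_ofReal
        (mul_nonneg (mul_nonneg hc00 hC0.le) (Real.rpow_nonneg (by positivity) _)) hle
    calc Real.sqrt (∫⁻ ξ' : E3,
            ENNReal.ofReal ((Bij γ i j (ξ - ξ'))^2 * Real.sqrt (Mx ξ'))).toReal
        ≤ Real.sqrt ((c0 * C0) * (1 + ‖ξ‖^2)^(γ+2)) := Real.sqrt_le_sqrt h2
      _ = Real.sqrt (c0 * C0) * Real.sqrt ((1 + ‖ξ‖^2)^(γ+2)) :=
          Real.sqrt_mul (mul_nonneg hc00 hC0.le) _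
      _ = Real.sqrt (c0 * C0) * jap ξ ^ (γ+2) := by
          congr 1
          rw [jap, Real.sqrt_eq_rpow, Real.sqrt_eq_rpow,
            ← Real.rpow_mul (by positivity), ← Real.rpow_mul (by positivity)]
          ring_nf
      _ ≤ Cf * jap ξ ^ (γ+2) := by
          apply mul_le_mul_of_nonneg_right _ hjpos.le
          have h := le_max_right C0 (Real.sqrt (c0 * C0))
          rw [hCf]
          linarith
end

section
/- Let 0 < p < 1 and κ > 0. There exists C > 0 (depending only on p and κ) such that for all t ≥ 0: ∫₀ᵗ (1+s)^{−5/2} e^{κ(1+s)^p} ds ≤ C (1+t)^{−(3/2+p)} e^{κ(1+t)^p}. -/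
open MeasureTheory Real

set_option maxHeartbeats 1000000


private lemma VPL_aux_deriv (p κ : ℝ) (s : ℝ) (hs : 0 < 1 + s) :
    HasDerivAt (fun s : ℝ => (1 + s) ^ (-(3 / 2 + p)) * Real.exp (κ * (1 + s) ^ p))
      ((1 + s) ^ (-(5 : ℝ) / 2) * Real.exp (κ * (1 + s) ^ p) *
        (κ * p - (3 / 2 + p) * (1 + s) ^ (-p))) s := by
  have hu : HasDerivAt (fun s : ℝ => 1 + s) 1 s := by
    simpa using (hasDerivAt_id s).const_add 1
  have h1 : HasDerivAt (fun s : ℝ => (1 + s) ^ (-(3 / 2 + p)))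
      (1 * (-(3 / 2 + p)) * (1 + s) ^ (-(3 / 2 + p) - 1)) s :=
    hu.rpow_const (Or.inl hs.ne')
  have h2 : HasDerivAt (fun s : ℝ => Real.exp (κ * (1 + s) ^ p))
      (Real.exp (κ * (1 + s) ^ p) * (κ * (1 * p * (1 + s) ^ (p - 1)))) s :=
    ((hu.rpow_const (Or.inl hs.ne')).const_mul κ).exp
  have h := h1.mul h2
  refine h.congr_deriv ?_
  symm
  have e1 : (1 + s) ^ (-(5 : ℝ) / 2) * (1 + s) ^ (-p) = (1 + s) ^ (-(3 / 2 + p) - 1) := by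
    rw [← Real.rpow_add hs]; ring_nf
  have e2 : (1 + s) ^ (-(3 / 2 + p)) * (1 + s) ^ (p - 1) = (1 + s) ^ (-(5 : ℝ) / 2) := by
    rw [← Real.rpow_add hs]; ring_nf
  linear_combination (-(3 / 2 + p) * Real.exp (κ * (1 + s) ^ p)) * e1 +
    (-(κ * p) * Real.exp (κ * (1 + s) ^ p)) * e2

private lemma VPL_cont_rpow (r : ℝ) :
    ContinuousOn (fun s : ℝ => (1 + s) ^ r) (Set.Ici (0 : ℝ)) := by
  intro s hs
  have h1s : (0 : ℝ) < 1 + s := by have : (0:ℝ) ≤ s := hs; linarith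
  exact ((Real.continuousAt_rpow_const _ r (Or.inl h1s.ne')).comp
    (by fun_prop : ContinuousAt (fun s : ℝ => 1 + s) s)).continuousWithinAt

private lemma VPL_contOn (p κ r : ℝ) :
    ContinuousOn (fun s : ℝ => (1 + s) ^ r * Real.exp (κ * (1 + s) ^ p))
      (Set.Ici (0 : ℝ)) :=
  (VPL_cont_rpow r).mul
    (Real.continuous_exp.comp_continuousOn (continuousOn_const.mul (VPL_cont_rpow p)))

private lemma VPL_contOn_f (p κ : ℝ) :
    ContinuousOn (fun s : ℝ => (1 + s) ^ (-(5 : ℝ) / 2) * Real.exp (κ * (1 + s) ^ p) *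
      (κ * p - (3 / 2 + p) * (1 + s) ^ (-p))) (Set.Ici (0 : ℝ)) :=
  (VPL_contOn p κ _).mul (continuousOn_const.sub (continuousOn_const.mul (VPL_cont_rpow (-p))))

private lemma VPL_int (p κ r a b : ℝ) (ha : 0 ≤ a) (hab : a ≤ b) :
    IntervalIntegrable (fun s : ℝ => (1 + s) ^ r * Real.exp (κ * (1 + s) ^ p))
      volume a b := by
  apply ContinuousOn.intervalIntegrable
  apply (VPL_contOn p κ r).mono
  rw [Set.uIcc_of_le hab]
  exact fun x hx => Set.mem_Ici.mpr (le_trans ha hx.1)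

private lemma VPL_int_f (p κ a b : ℝ) (ha : 0 ≤ a) (hab : a ≤ b) :
    IntervalIntegrable (fun s : ℝ => (1 + s) ^ (-(5 : ℝ) / 2) * Real.exp (κ * (1 + s) ^ p) *
      (κ * p - (3 / 2 + p) * (1 + s) ^ (-p))) volume a b := by
  apply ContinuousOn.intervalIntegrable
  apply (VPL_contOn_f p κ).mono
  rw [Set.uIcc_of_le hab]
  exact fun x hx => Set.mem_Ici.mpr (le_trans ha hx.1)

private lemma VPL_ftc (p κ a b : ℝ) (ha : 0 ≤ a) (hab : a ≤ b) :
    (∫ s in a..b, (1 + s) ^ (-(5 : ℝ) / 2) * Real.exp (κ * (1 + s) ^ p) *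
        (κ * p - (3 / 2 + p) * (1 + s) ^ (-p)))
      = (1 + b) ^ (-(3 / 2 + p)) * Real.exp (κ * (1 + b) ^ p)
        - (1 + a) ^ (-(3 / 2 + p)) * Real.exp (κ * (1 + a) ^ p) := by
  apply intervalIntegral.integral_eq_sub_of_hasDerivAt
  · intro s hs
    rw [Set.uIcc_of_le hab] at hs
    exact VPL_aux_deriv p κ s (by have := hs.1; linarith)
  · exact VPL_int_f p κ a b ha hab

theorem time_weighted_integral_estimate (p κ : ℝ) (hp1 : 0 < p) (hp2 : p < 1)
    (hκ : 0 < κ) :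
    ∃ C > (0 : ℝ), ∀ t : ℝ, 0 ≤ t →
      (∫ s in (0 : ℝ)..t, (1 + s) ^ (-(5 : ℝ) / 2) * Real.exp (κ * (1 + s) ^ p))
        ≤ C * (1 + t) ^ (-(3 / 2 + p)) * Real.exp (κ * (1 + t) ^ p) := by
  have hb : (0 : ℝ) < 3 / 2 + p := by linarith
  have hkp : 0 < κ * p := mul_pos hκ hp1
  set X : ℝ := 2 * (3 / 2 + p) / (κ * p) with hXdef
  have hXpos : 0 < X := div_pos (by linarith) hkp
  set s₀ : ℝ := X ^ (1 / p) with hs₀def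
  have hs₀0 : 0 ≤ s₀ := Real.rpow_nonneg hXpos.le _
  -- notation
  set g : ℝ → ℝ := fun s => (1 + s) ^ (-(5 : ℝ) / 2) * Real.exp (κ * (1 + s) ^ p) with hgdef
  set F : ℝ → ℝ := fun s => (1 + s) ^ (-(3 / 2 + p)) * Real.exp (κ * (1 + s) ^ p) with hFdef
  set f : ℝ → ℝ := fun s => (1 + s) ^ (-(5 : ℝ) / 2) * Real.exp (κ * (1 + s) ^ p) *
    (κ * p - (3 / 2 + p) * (1 + s) ^ (-p)) with hfdef
  have hgpos : ∀ s : ℝ, 0 ≤ s → 0 < g s := by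
    intro s hs
    have h1s : (0 : ℝ) < 1 + s := by linarith
    exact mul_pos (Real.rpow_pos_of_pos h1s _) (Real.exp_pos _)
  have hFpos : ∀ s : ℝ, 0 ≤ s → 0 < F s := by
    intro s hs
    have h1s : (0 : ℝ) < 1 + s := by linarith
    exact mul_pos (Real.rpow_pos_of_pos h1s _) (Real.exp_pos _)
  -- key pointwise bound on [s₀, ∞)
  have key : ∀ s : ℝ, s₀ ≤ s → g s ≤ 2 / (κ * p) * f s := by
    intro s hs
    have h0s : (0 : ℝ) ≤ s := le_trans hs₀0 hs
    have h1s : (0 : ℝ) < 1 + s := by linarith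
    have hXle : X ≤ (1 + s) ^ p := by
      have h1 : (X ^ (1 / p)) ^ p = X := by
        rw [← Real.rpow_mul hXpos.le, one_div, inv_mul_cancel₀ hp1.ne', Real.rpow_one]
      calc X = (X ^ (1 / p)) ^ p := h1.symm
        _ ≤ (1 + s) ^ p :=
            Real.rpow_le_rpow (Real.rpow_nonneg hXpos.le _) (by linarith) hp1.le
    have hinv : (1 + s) ^ (-p) ≤ X⁻¹ := by
      rw [Real.rpow_neg h1s.le]
      exact inv_anti₀ hXpos hXle
    have hXinv : (3 / 2 + p) * X⁻¹ = κ * p / 2 := by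
      rw [hXdef]
      field_simp
    have hlow : κ * p / 2 ≤ κ * p - (3 / 2 + p) * (1 + s) ^ (-p) := by
      have h2 : (3 / 2 + p) * (1 + s) ^ (-p) ≤ κ * p / 2 := by
        calc (3 / 2 + p) * (1 + s) ^ (-p) ≤ (3 / 2 + p) * X⁻¹ :=
              mul_le_mul_of_nonneg_left hinv hb.le
          _ = κ * p / 2 := hXinv
      linarith
    have hg0 : 0 ≤ g s := (hgpos s h0s).le
    have hstep : g s * (κ * p / 2) ≤ g s * (κ * p - (3 / 2 + p) * (1 + s) ^ (-p)) :=
      mul_le_mul_of_nonneg_left hlow hg0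
    have hfs : f s = g s * (κ * p - (3 / 2 + p) * (1 + s) ^ (-p)) := rfl
    rw [hfs]
    calc g s = 2 / (κ * p) * (g s * (κ * p / 2)) := by
          field_simp
      _ ≤ 2 / (κ * p) * (g s * (κ * p - (3 / 2 + p) * (1 + s) ^ (-p))) :=
          mul_le_mul_of_nonneg_left hstep (by positivity)
  -- minimum of F on [0, s₀]
  obtain ⟨x₀, hx₀, hmin⟩ := isCompact_Icc.exists_isMinOn (Set.nonempty_Icc.mpr hs₀0)
    ((VPL_contOn p κ _).mono (fun x hx => Set.mem_Ici.mpr hx.1) :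
      ContinuousOn F (Set.Icc 0 s₀))
  set m : ℝ := F x₀ with hmdef
  have hmpos : 0 < m := hFpos x₀ hx₀.1
  set A : ℝ := ∫ s in (0 : ℝ)..s₀, g s with hAdef
  have hA0 : 0 ≤ A :=
    intervalIntegral.integral_nonneg hs₀0 (fun s hs => (hgpos s hs.1).le)
  refine ⟨A / m + 2 / (κ * p) + 1, by positivity, ?_⟩
  intro t ht
  have h1t : (0 : ℝ) < 1 + t := by linarith
  rw [mul_assoc]
  have hCform : ∀ u : ℝ, 0 ≤ u →
      A / m * u + 2 / (κ * p) * u ≤ (A / m + 2 / (κ * p) + 1) * u := by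
    intro u hu; nlinarith
  rcases le_total t s₀ with hts | hst
  · -- small time: t ≤ s₀
    have hsplit : (∫ s in (0 : ℝ)..t, g s) + (∫ s in t..s₀, g s) = A :=
      intervalIntegral.integral_add_adjacent_intervals
        (VPL_int p κ _ 0 t le_rfl ht) (VPL_int p κ _ t s₀ ht hts)
    have h2 : 0 ≤ ∫ s in t..s₀, g s :=
      intervalIntegral.integral_nonneg hts (fun s hs => (hgpos s (le_trans ht hs.1)).le)
    have hItA : (∫ s in (0 : ℝ)..t, g s) ≤ A := by linarith
    have hFt : m ≤ F t := isMinOn_iff.mp hmin t ⟨ht, hts⟩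
    have hFt0 : 0 < F t := hFpos t ht
    calc (∫ s in (0 : ℝ)..t, g s) ≤ A := hItA
      _ = A / m * m := by field_simp
      _ ≤ A / m * F t := mul_le_mul_of_nonneg_left hFt (by positivity)
      _ ≤ (A / m + 2 / (κ * p) + 1) * F t := by
          have h3 : 0 ≤ (2 / (κ * p) + 1) * F t := by positivity
          nlinarith [h3]
  · -- large time: s₀ ≤ t
    have hsplit : (∫ s in (0 : ℝ)..s₀, g s) + (∫ s in s₀..t, g s)
        = ∫ s in (0 : ℝ)..t, g s :=
      intervalIntegral.integral_add_adjacent_intervals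
        (VPL_int p κ _ 0 s₀ le_rfl hs₀0) (VPL_int p κ _ s₀ t hs₀0 hst)
    have hftc : (∫ s in s₀..t, f s) = F t - F s₀ := VPL_ftc p κ s₀ t hs₀0 hst
    have hImono : (∫ s in s₀..t, g s) ≤ ∫ s in s₀..t, 2 / (κ * p) * f s := by
      apply intervalIntegral.integral_mono_on hst
        (VPL_int p κ _ s₀ t hs₀0 hst)
        (((VPL_int_f p κ s₀ t hs₀0 hst)).const_mul _)
      intro s hs
      exact key s hs.1
    have hIval : (∫ s in s₀..t, 2 / (κ * p) * f s) = 2 / (κ * p) * (F t - F s₀) := by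
      rw [intervalIntegral.integral_const_mul, hftc]
    have hFs₀ : m ≤ F s₀ := isMinOn_iff.mp hmin s₀ ⟨hs₀0, le_rfl⟩
    have hFmono : F s₀ ≤ F t := by
      have hnn : 0 ≤ ∫ s in s₀..t, f s := by
        apply intervalIntegral.integral_nonneg hst
        intro s hs
        have h0s : (0 : ℝ) ≤ s := le_trans hs₀0 hs.1
        have h1 := (hgpos s h0s).le.trans (key s hs.1)
        have hc : 0 < 2 / (κ * p) := by positivity
        nlinarith [h1, hc]
      linarith [hftc ▸ hnn]
    have hFt0 : 0 < F t := hFpos t ht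
    have hFs₀0 : 0 < F s₀ := hFpos s₀ hs₀0
    calc (∫ s in (0 : ℝ)..t, g s) = A + (∫ s in s₀..t, g s) := hsplit.symm
      _ ≤ A + 2 / (κ * p) * (F t - F s₀) := by
          have := hImono.trans (le_of_eq hIval); linarith
      _ ≤ A / m * F t + 2 / (κ * p) * F t := by
          have hA' : A ≤ A / m * F t := by
            calc A = A / m * m := by field_simp
              _ ≤ A / m * F t := mul_le_mul_of_nonneg_left
                  (le_trans hFs₀ hFmono) (by positivity)
          have h2' : 2 / (κ * p) * (F t - F s₀) ≤ 2 / (κ * p) * F t :=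
            mul_le_mul_of_nonneg_left (by linarith) (by positivity)
          linarith
      _ ≤ (A / m + 2 / (κ * p) + 1) * F t := hCform (F t) hFt0.le
end
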